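/- Suppose c* is an optimal pushing strategy and for some index m we have 0 < c*_m < 1. Then the first-order condition B · ρ_m · (∑_{k=1}^M t_k (1 − c*_k)) + 1 = exp(B · ∑_{k=1}^M t_k ρ_k c*_k) holds. -/

import Mathlib

/-- If `c` is an optimal pushing strategy and `0 < c m < 1` for some
group `m`, then the first-order condition
`B ρ_m (∑_k t_k (1 - c_k)) + 1 = exp (B ∑_k t_k ρ_k c_k)` holds. -/
theorem stmt_0 (M : ℕ) (hM : 1 ≤ M) (B : ℝ) (hB : 0 < B)
    (t ρ : Fin M → ℝ) (ht : ∀ i, 0 < t i) (hρ : ∀ i, 0 < ρ i ∧ ρ i ≤ 1)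
    (c : Fin M → ℝ) (hc : ∀ i, 0 ≤ c i ∧ c i ≤ 1)
    (hopt : ∀ d : Fin M → ℝ, (∀ i, 0 ≤ d i ∧ d i ≤ 1) →
      (∑ i, t i * (1 - d i)) * (1 - Real.exp (-B * ∑ k, t k * ρ k * d k)) ≤
      (∑ i, t i * (1 - c i)) * (1 - Real.exp (-B * ∑ k, t k * ρ k * c k)))
    (m : Fin M) (hm0 : 0 < c m) (hm1 : c m < 1) :
    B * ρ m * (∑ k, t k * (1 - c k)) + 1 = Real.exp (B * ∑ k, t k * ρ k * c k) := by
  classical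
  set A : ℝ := ∑ i, t i * (1 - c i) with hA
  set T : ℝ := ∑ k, t k * ρ k * c k with hT
  set f : ℝ → ℝ := fun x => (A - t m * x) * (1 - Real.exp (-B * (T + t m * ρ m * x)))
    with hf
  -- sum identities for updated strategies
  have sumA : ∀ v : ℝ, ∑ i, t i * (1 - Function.update c m v i) = A - t m * (v - c m) := by
    intro v
    have h : ∀ i, t i * (1 - Function.update c m v i)
        = t i * (1 - c i) + (if i = m then t m * (c m - v) else 0) := by
      intro i
      by_cases h : i = m
      · subst h; simp [Function.update]; ring
      · simp [Function.update, h]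
    simp only [h, Finset.sum_add_distrib, Finset.sum_ite_eq', Finset.mem_univ, if_true]
    rw [← hA]; ring
  have sumT : ∀ v : ℝ, ∑ k, t k * ρ k * Function.update c m v k = T + t m * ρ m * (v - c m) := by
    intro v
    have h : ∀ i, t i * ρ i * Function.update c m v i
        = t i * ρ i * c i + (if i = m then t m * ρ m * (v - c m) else 0) := by
      intro i
      by_cases h : i = m
      · subst h; simp [Function.update]; ring
      · simp [Function.update, h]
    simp only [h, Finset.sum_add_distrib, Finset.sum_ite_eq', Finset.mem_univ, if_true]
    rw [← hT]
  -- 0 is a local max of f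
  have hmax : IsLocalMax f 0 := by
    have hnbhd : Set.Ioo (-(c m)) (1 - c m) ∈ nhds (0 : ℝ) :=
      Ioo_mem_nhds (by linarith) (by linarith)
    refine Filter.eventually_of_mem hnbhd ?_
    intro x hx
    obtain ⟨hx1, hx2⟩ := hx
    set d : Fin M → ℝ := Function.update c m (c m + x) with hd
    have hdb : ∀ i, 0 ≤ d i ∧ d i ≤ 1 := by
      intro i
      by_cases h : i = m
      · subst h; simp [hd]; constructor <;> linarith
      · simp [hd, Function.update, h]; exact hc i
    have := hopt d hdb
    have h1 : ∑ i, t i * (1 - d i) = A - t m * x := by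
      rw [hd, sumA]; ring_nf
    have h2 : ∑ k, t k * ρ k * d k = T + t m * ρ m * x := by
      rw [hd, sumT]; ring_nf
    rw [h1, h2] at this
    simp only [f]
    calc (A - t m * x) * (1 - Real.exp (-B * (T + t m * ρ m * x)))
        ≤ A * (1 - Real.exp (-B * T)) := this
      _ = (A - t m * 0) * (1 - Real.exp (-B * (T + t m * ρ m * 0))) := by ring_nf
  -- derivative of f at 0
  have h1 : HasDerivAt (fun x : ℝ => A - t m * x) (-(t m)) 0 := by
    simpa [Pi.sub_def] using (hasDerivAt_const (0 : ℝ) A).sub ((hasDerivAt_id (0 : ℝ)).const_mul (t m))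
  have hu : HasDerivAt (fun x : ℝ => -B * (T + t m * ρ m * x)) (-B * (t m * ρ m)) 0 := by
    have := ((hasDerivAt_const (0 : ℝ) T).add
      ((hasDerivAt_id (0 : ℝ)).const_mul (t m * ρ m))).const_mul (-B)
    simpa using this
  have hexp : HasDerivAt (fun x : ℝ => Real.exp (-B * (T + t m * ρ m * x)))
      (Real.exp (-B * T) * (-B * (t m * ρ m))) 0 := by
    have := hu.exp
    simpa using this
  have h2 : HasDerivAt (fun x : ℝ => 1 - Real.exp (-B * (T + t m * ρ m * x)))
      (-(Real.exp (-B * T) * (-B * (t m * ρ m)))) 0 := by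
    simpa [Pi.sub_def] using (hasDerivAt_const (0 : ℝ) 1).sub hexp
  have hfd : HasDerivAt f
      ((-(t m)) * (1 - Real.exp (-B * (T + t m * ρ m * 0)))
        + (A - t m * 0) * (-(Real.exp (-B * T) * (-B * (t m * ρ m))))) 0 := h1.mul h2
  have hD : (-(t m)) * (1 - Real.exp (-B * (T + t m * ρ m * 0)))
      + (A - t m * 0) * (-(Real.exp (-B * T) * (-B * (t m * ρ m)))) = 0 := by
    rw [← hfd.deriv]; exact hmax.deriv_eq_zero
  have hsimp : (-(t m)) * (1 - Real.exp (-B * T))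
      + A * (Real.exp (-B * T) * (B * (t m * ρ m))) = 0 := by
    have : -B * (T + t m * ρ m * 0) = -B * T := by ring
    rw [this] at hD
    linarith [hD]
  -- algebra: divide by t m and multiply by exp (B*T)
  set E : ℝ := Real.exp (-B * T) with hE
  have hEpos : 0 < E := Real.exp_pos _
  have htm : (0 : ℝ) < t m := ht m
  have key : A * (E * (B * ρ m)) + E = 1 := by
    have h : t m * (A * (E * (B * ρ m)) + E - 1) = 0 := by
      nlinarith [hsimp]
    have := mul_eq_zero.mp h
    rcases this with h' | h'
    · exact absurd h' (ne_of_gt htm)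
    · linarith
  have hmulE : E * Real.exp (B * T) = 1 := by
    rw [hE, ← Real.exp_add]; norm_num
  have : (A * (E * (B * ρ m)) + E) * Real.exp (B * T) = Real.exp (B * T) := by
    rw [key, one_mul]
  have expand : A * (E * Real.exp (B * T)) * (B * ρ m) + E * Real.exp (B * T)
      = Real.exp (B * T) := by linarith [this]; 
  rw [hmulE] at expand
  linarith [expand]
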